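/- Let K be a finite abstract simplicial complex and γ_1, …, γ_l mutually distinct k-faces of K such that γ_i ∪ γ_j is not a face of K whenever i ≠ j. Form the iterated subdivision K_l := (…(K_{γ_1})_{γ_2}…)_{γ_l} obtained by successively adjoining each γ_m as a new vertex. Then for all i ≠ j, the pair {γ_i, γ_j} is not a face of K_l. -/
import Mathlib


noncomputable section

def IsSC {W : Type*} (K : Set (Finset W)) : Prop := ∀ γ ∈ K, ∀ δ ⊆ γ, δ ∈ K

def subdivAt {W : Type*} [DecidableEq W] (K : Set (Finset W)) (γb : Finset W) (v : W) :
    Set (Finset W) :=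
  {γ ∈ K | ¬ γb ⊆ γ} ∪ {δ | ∃ γ ∈ K, γb ⊆ γ ∧ ∃ ν ∈ γb, δ = insert v (γ.erase ν)}

def liftF {V : Type*} [DecidableEq V] (γ : Finset V) : Finset (V ⊕ Finset V) :=
  γ.image Sum.inl

def liftK {V : Type*} [DecidableEq V] (K : Set (Finset V)) : Set (Finset (V ⊕ Finset V)) :=
  liftF '' K

/-- The iterated subdivision `K_m = (…(K_{γ₁})_{γ₂}…)_{γ_m}`, successively adjoining the
faces `γ₁, …, γ_l` as new vertices. -/
def iterSubdiv {V : Type} [DecidableEq V] (K : Set (Finset V)) (l : ℕ) (γs : Fin l → Finset V) :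
    ℕ → Set (Finset (V ⊕ Finset V))
  | 0 => liftK K
  | m + 1 =>
    if h : m < l then
      subdivAt (iterSubdiv K l γs m) (liftF (γs ⟨m, h⟩)) (Sum.inr (γs ⟨m, h⟩))
    else iterSubdiv K l γs m

/-- The support of a face of a subdivision: replace each new vertex `inr γ` by `γ`. -/
def supp {V : Type} [DecidableEq V] (δ : Finset (V ⊕ Finset V)) : Finset V :=
  δ.biUnion (fun x => Sum.elim (fun v => {v}) id x)

lemma supp_liftF {V : Type} [DecidableEq V] (γ : Finset V) : supp (liftF γ) = γ := by
  ext v; simp [supp, liftF]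

lemma supp_mono {V : Type} [DecidableEq V] {δ γ : Finset (V ⊕ Finset V)} (h : δ ⊆ γ) :
    supp δ ⊆ supp γ := Finset.biUnion_subset_biUnion_of_subset_left _ h

lemma supp_invariant {V : Type} [DecidableEq V] (K : Set (Finset V)) (hK : IsSC K)
    (l : ℕ) (γs : Fin l → Finset V) :
    ∀ m, ∀ δ ∈ iterSubdiv K l γs m, supp δ ∈ K := by
  intro m
  induction m with
  | zero =>
    intro δ hδ
    obtain ⟨γ, hγ, rfl⟩ := hδ
    rw [supp_liftF]; exact hγ
  | succ m ih =>
    intro δ hδ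
    rw [iterSubdiv] at hδ
    split at hδ
    · rcases hδ with ⟨hδ, _⟩ | ⟨γ, hγ, hsub, ν, hν, rfl⟩
      · exact ih δ hδ
      · apply hK _ (ih γ hγ)
        have h1 : supp (γ.erase ν) ⊆ supp γ := supp_mono (Finset.erase_subset _ _)
        have h2 : ∀ i, liftF (γs i) ⊆ γ → γs i ⊆ supp γ := by
          intro i hsub
          intro x hx
          have hx' : Sum.inl x ∈ γ := hsub (by simp [liftF, hx])
          exact Finset.mem_biUnion.2 ⟨_, hx', by simp⟩
        intro x hx
        rw [supp, Finset.biUnion_insert] at hx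
        rcases Finset.mem_union.1 hx with hx | hx
        · exact h2 _ hsub (by simpa using hx)
        · exact h1 hx
    · exact ih δ hδ

/-- **Winter, 5.6 (`sd-l`)**: let `γ₁, …, γ_l` be mutually distinct `k`-faces of `K` such
that `γᵢ ∪ γⱼ ∉ K` for `i ≠ j`.  Then in the iterated subdivision `K_l` no edge joins two
of the new vertices: `{γᵢ, γⱼ} ∉ K_l` for `i ≠ j`. -/
theorem iterSubdiv_no_edge {V : Type} [DecidableEq V] (K : Set (Finset V)) (hK : IsSC K)
    (k l : ℕ) (γs : Fin l → Finset V) (hinj : Function.Injective γs)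
    (hface : ∀ i, γs i ∈ K ∧ (γs i).card = k + 1)
    (hun : ∀ i j, i ≠ j → (γs i ∪ γs j) ∉ K) :
    ∀ i j, i ≠ j →
      ({Sum.inr (γs i), Sum.inr (γs j)} : Finset (V ⊕ Finset V)) ∉ iterSubdiv K l γs l := by
  intro i j hij hmem
  have h := supp_invariant K hK l γs l _ hmem
  have hs : supp ({Sum.inr (γs i), Sum.inr (γs j)} : Finset (V ⊕ Finset V)) = γs i ∪ γs j := by
    simp [supp, Finset.biUnion_insert]
  rw [hs] at h
  exact hun i j hij h

end
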